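/- Let q > r be positive integers with r not dividing q, g = gcd(q,r), q' = q/g, r' = r/g. Let B be a positive integer, A = (A₁,A₂) ∈ ℤ² with gcd(A₁,A₂,B) = 1, and suppose u = (u₁,u₂) ∈ ℤ², v = (v₁,v₂) ∈ ℤ² satisfy gcd(Bu₁+A₁, Bu₂+A₂, Bq) = 1 and gcd(Bv₁+A₁, Bv₂+A₂, Br) = 1. Then |r'(u + A/B) − q'(v + A/B)| ≥ 1/B, where |·| is the maximum norm on ℝ². -/

import Mathlib

theorem shift_reduced_separation (q r : ℕ) (hr : 0 < r) (hrq : r < q) (hnd : ¬ r ∣ q)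
    (q' r' : ℕ) (hq' : q' = q / Nat.gcd q r) (hr' : r' = r / Nat.gcd q r)
    (B : ℕ) (hB : 0 < B) (A : ℤ × ℤ)
    (hA : Int.gcd (Int.gcd A.1 A.2 : ℤ) (B : ℤ) = 1)
    (u v : ℤ × ℤ)
    (hu : Int.gcd (Int.gcd ((B : ℤ) * u.1 + A.1) ((B : ℤ) * u.2 + A.2) : ℤ) ((B : ℤ) * q) = 1)
    (hv : Int.gcd (Int.gcd ((B : ℤ) * v.1 + A.1) ((B : ℤ) * v.2 + A.2) : ℤ) ((B : ℤ) * r) = 1) :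
    (1 : ℝ) / B ≤
      max |(r' : ℝ) * ((u.1 : ℝ) + (A.1 : ℝ) / B) - (q' : ℝ) * ((v.1 : ℝ) + (A.1 : ℝ) / B)|
          |(r' : ℝ) * ((u.2 : ℝ) + (A.2 : ℝ) / B) - (q' : ℝ) * ((v.2 : ℝ) + (A.2 : ℝ) / B)| := by
  by_contra h
  push_neg at h
  have hBR : (0 : ℝ) < (B : ℝ) := by exact_mod_cast hB
  rw [max_lt_iff] at h
  obtain ⟨h1, h2⟩ := h
  -- integer numerators
  set N1 : ℤ := (r' : ℤ) * ((B : ℤ) * u.1 + A.1) - (q' : ℤ) * ((B : ℤ) * v.1 + A.1) with hN1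
  set N2 : ℤ := (r' : ℤ) * ((B : ℤ) * u.2 + A.2) - (q' : ℤ) * ((B : ℤ) * v.2 + A.2) with hN2
  have key : ∀ (N : ℤ) (x y a : ℤ),
      N = (r' : ℤ) * ((B : ℤ) * x + a) - (q' : ℤ) * ((B : ℤ) * y + a) →
      |(r' : ℝ) * ((x : ℝ) + (a : ℝ) / B) - (q' : ℝ) * ((y : ℝ) + (a : ℝ) / B)| < 1 / B →
      N = 0 := by
    intro N x y a hNdef habs
    have heq : (r' : ℝ) * ((x : ℝ) + (a : ℝ) / B) - (q' : ℝ) * ((y : ℝ) + (a : ℝ) / B)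
        = (N : ℝ) / B := by
      rw [hNdef]
      field_simp
      push_cast
      ring
    rw [heq, abs_div, abs_of_pos hBR, div_lt_div_iff_of_pos_right hBR] at habs
    have h' : |N| < 1 := by exact_mod_cast habs
    have := abs_lt.mp h'
    omega
  have hN1z : N1 = 0 := key N1 u.1 v.1 A.1 hN1 h1
  have hN2z : N2 = 0 := key N2 u.2 v.2 A.2 hN2 h2
  -- number theory
  have hg : 0 < Nat.gcd q r := Nat.gcd_pos_of_pos_right q hr
  have hcop : Nat.Coprime q' r' := by
    rw [hq', hr']; exact Nat.coprime_div_gcd_div_gcd hg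
  have hr'ne : r' ≠ 1 := by
    intro h1
    apply hnd
    have hgr : Nat.gcd q r ∣ r := Nat.gcd_dvd_right q r
    rw [hr'] at h1
    have hrg : r = Nat.gcd q r * 1 := Nat.eq_mul_of_div_eq_right hgr h1
    rw [hrg, Nat.mul_one]
    exact Nat.gcd_dvd_left q r
  obtain ⟨p, hp, hpd⟩ := Nat.exists_prime_and_dvd hr'ne
  have hpq' : ¬ (p ∣ q') := by
    intro hpq
    have hd : p ∣ Nat.gcd q' r' := Nat.dvd_gcd hpq hpd
    rw [hcop] at hd
    exact hp.ne_one (Nat.eq_one_of_dvd_one hd)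
  have hpv1 : (p : ℤ) ∣ ((B : ℤ) * v.1 + A.1) := by
    have hdvd : (p : ℤ) ∣ (q' : ℤ) * ((B : ℤ) * v.1 + A.1) := by
      have : (q' : ℤ) * ((B : ℤ) * v.1 + A.1) = (r' : ℤ) * ((B : ℤ) * u.1 + A.1) := by
        omega
      rw [this]
      exact Dvd.dvd.mul_right (Int.natCast_dvd_natCast.mpr hpd) _
    rcases ((Nat.prime_iff_prime_int.mp hp).dvd_mul.mp hdvd) with h | h
    · exact absurd (Int.natCast_dvd_natCast.mp h) hpq'
    · exact h
  have hpv2 : (p : ℤ) ∣ ((B : ℤ) * v.2 + A.2) := by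
    have hdvd : (p : ℤ) ∣ (q' : ℤ) * ((B : ℤ) * v.2 + A.2) := by
      have : (q' : ℤ) * ((B : ℤ) * v.2 + A.2) = (r' : ℤ) * ((B : ℤ) * u.2 + A.2) := by
        omega
      rw [this]
      exact Dvd.dvd.mul_right (Int.natCast_dvd_natCast.mpr hpd) _
    rcases ((Nat.prime_iff_prime_int.mp hp).dvd_mul.mp hdvd) with h | h
    · exact absurd (Int.natCast_dvd_natCast.mp h) hpq'
    · exact h
  have hr'r : r' ∣ r := by rw [hr']; exact Nat.div_dvd_of_dvd (Nat.gcd_dvd_right q r)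
  have hpBr : (p : ℤ) ∣ (B : ℤ) * r :=
    Dvd.dvd.mul_left (Int.natCast_dvd_natCast.mpr (hpd.trans hr'r)) _
  have hfin : (p : ℤ) ∣ ((Int.gcd ((Int.gcd ((B : ℤ) * v.1 + A.1) ((B : ℤ) * v.2 + A.2) : ℕ) : ℤ) ((B : ℤ) * r) : ℕ) : ℤ) :=
    Int.dvd_coe_gcd (Int.dvd_coe_gcd hpv1 hpv2) hpBr
  rw [hv] at hfin
  have h1' : (p : ℤ) ∣ (1 : ℤ) := by exact_mod_cast hfin
  have := Int.le_of_dvd one_pos h1'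
  have := hp.two_le
  omega
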